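/- arXiv:1402.3191 — 8 statements merged into one kernel-verified Lean document; each statement's English description precedes it below -/
import Mathlib

section
/- Let G be a group, A an abelian group with pseudonorm ν, ψ: G → A a quasihomomorphism with defect D, and S ⊆ G a subset such that ν(ψ(s)) ≤ C₀ for every s ∈ S ∪ S⁻¹. If k ≥ 1 and g ∈ G can be written as a product g = (β₁s₁β₁⁻¹)(β₂s₂β₂⁻¹)⋯(β_k s_k β_k⁻¹) with each sᵢ ∈ S ∪ S⁻¹ and βᵢ ∈ G, then ν(ψ(g)) ≤ k·(C₀ + ν(ψ(1_G)) + 4D). In particular, if ψ is bounded on a set normally generating G then ψ is Lipschitz with respect to the biinvariant word norm associated to S. -/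
theorem quasihom_bounded_on_normal_generators_lipschitz
    {G : Type*} [Group G] {A : Type*} [AddCommGroup A]
    (ν : A → ℝ)
    (hν_nonneg : ∀ a, 0 ≤ ν a)
    (hν_neg : ∀ a, ν (-a) = ν a)
    (hν_add : ∀ a b, ν (a + b) ≤ ν a + ν b)
    (ψ : G → A) (D : ℝ) (hD : 0 ≤ D)
    (hψ : ∀ g h : G, ν (ψ g - ψ (g * h) + ψ h) ≤ D)
    (S : Set G) (C₀ : ℝ)
    (hS : ∀ s ∈ S ∪ S⁻¹, ν (ψ s) ≤ C₀) :
    ∀ (k : ℕ), 1 ≤ k → ∀ (s β : Fin k → G),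
      (∀ i, s i ∈ S ∪ S⁻¹) →
      ∀ g : G, g = (List.ofFn (fun i => β i * s i * (β i)⁻¹)).prod →
      ν (ψ g) ≤ k * (C₀ + ν (ψ 1) + 4 * D) := by
  -- key1: submultiplicative-type bound
  have key1 : ∀ x y : G, ν (ψ (x * y)) ≤ ν (ψ x) + ν (ψ y) + D := by
    intro x y
    have h1 : ψ (x * y) = (ψ x + ψ y) + (-(ψ x - ψ (x * y) + ψ y)) := by abel
    calc ν (ψ (x * y)) = ν ((ψ x + ψ y) + (-(ψ x - ψ (x * y) + ψ y))) := by rw [← h1]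
      _ ≤ ν (ψ x + ψ y) + ν (-(ψ x - ψ (x * y) + ψ y)) := hν_add _ _
      _ ≤ (ν (ψ x) + ν (ψ y)) + D := by
          rw [hν_neg]
          exact add_le_add (hν_add _ _) (hψ x y)
      _ = ν (ψ x) + ν (ψ y) + D := by ring
  set M : ℝ := C₀ + ν (ψ 1) + 3 * D with hM
  -- key2: conjugates are bounded
  have key2 : ∀ (x b : G), x ∈ S ∪ S⁻¹ → ν (ψ (b * x * b⁻¹)) ≤ M := by
    intro x b hx
    have e1 := hψ b (x * b⁻¹)
    have e2 := hψ x b⁻¹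
    have e3 := hψ b b⁻¹
    rw [mul_inv_cancel] at e3
    have hb : b * (x * b⁻¹) = b * x * b⁻¹ := by group
    rw [hb] at e1
    have decomp : ψ (b * x * b⁻¹) =
        (-(ψ b - ψ (b * x * b⁻¹) + ψ (x * b⁻¹)))
        + (-(ψ x - ψ (x * b⁻¹) + ψ b⁻¹))
        + (ψ b - ψ 1 + ψ b⁻¹) + ψ x + ψ 1 := by abel
    calc ν (ψ (b * x * b⁻¹)) =
        ν ((-(ψ b - ψ (b * x * b⁻¹) + ψ (x * b⁻¹)))
        + (-(ψ x - ψ (x * b⁻¹) + ψ b⁻¹))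
        + (ψ b - ψ 1 + ψ b⁻¹) + ψ x + ψ 1) := by rw [← decomp]
      _ ≤ ν ((-(ψ b - ψ (b * x * b⁻¹) + ψ (x * b⁻¹)))
        + (-(ψ x - ψ (x * b⁻¹) + ψ b⁻¹))
        + (ψ b - ψ 1 + ψ b⁻¹) + ψ x) + ν (ψ 1) := hν_add _ _
      _ ≤ (ν ((-(ψ b - ψ (b * x * b⁻¹) + ψ (x * b⁻¹)))
        + (-(ψ x - ψ (x * b⁻¹) + ψ b⁻¹))
        + (ψ b - ψ 1 + ψ b⁻¹)) + ν (ψ x)) + ν (ψ 1) := by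
          exact add_le_add_left (hν_add _ _) _
      _ ≤ ((ν ((-(ψ b - ψ (b * x * b⁻¹) + ψ (x * b⁻¹)))
        + (-(ψ x - ψ (x * b⁻¹) + ψ b⁻¹))) + ν (ψ b - ψ 1 + ψ b⁻¹)) + ν (ψ x)) + ν (ψ 1) := by
          exact add_le_add_left (add_le_add_left (hν_add _ _) _) _
      _ ≤ (((ν (-(ψ b - ψ (b * x * b⁻¹) + ψ (x * b⁻¹)))
        + ν (-(ψ x - ψ (x * b⁻¹) + ψ b⁻¹))) + ν (ψ b - ψ 1 + ψ b⁻¹)) + ν (ψ x)) + ν (ψ 1) := by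
          exact add_le_add_left (add_le_add_left (add_le_add_left (hν_add _ _) _) _) _
      _ ≤ (((D + D) + D) + C₀) + ν (ψ 1) := by
          refine add_le_add_left (add_le_add ?_ (hS x hx)) _
          refine add_le_add (add_le_add ?_ ?_) e3
          · rw [hν_neg]; exact e1
          · rw [hν_neg]; exact e2
      _ = M := by rw [hM]; ring
  -- product lemma
  have prodlem : ∀ (L : List G), L ≠ [] → (∀ x ∈ L, ν (ψ x) ≤ M) →
      ν (ψ L.prod) ≤ L.length * (M + D) := by
    intro L
    induction L with
    | nil => intro h; exact absurd rfl h
    | cons x L ih =>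
      intro _ hmem
      cases L with
      | nil =>
        simp only [List.prod_cons, List.prod_nil, mul_one, List.length_cons,
          List.length_nil]
        have := hmem x List.mem_cons_self
        push_cast
        linarith
      | cons y L' =>
        have hL : (y :: L') ≠ [] := by simp
        have hmem' : ∀ z ∈ (y :: L'), ν (ψ z) ≤ M := fun z hz =>
          hmem z (List.mem_cons_of_mem _ hz)
        have hrec := ih hL hmem'
        have hx := hmem x List.mem_cons_self
        have h1 : ν (ψ ((x :: y :: L').prod)) ≤ ν (ψ x) + ν (ψ ((y :: L').prod)) + D := by
          rw [List.prod_cons]; exact key1 x ((y :: L').prod)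
        have hlen : ((x :: y :: L').length : ℝ) = ((y :: L').length : ℝ) + 1 := by
          simp
        rw [hlen]
        linarith
  intro k hk s β hs g hg
  have hne : (List.ofFn (fun i => β i * s i * (β i)⁻¹)) ≠ [] := by
    intro h
    have := congrArg List.length h
    simp at this
    omega
  have hmem : ∀ x ∈ (List.ofFn (fun i => β i * s i * (β i)⁻¹)), ν (ψ x) ≤ M := by
    intro x hx
    rw [List.mem_ofFn] at hx
    obtain ⟨i, hi⟩ := hx
    rw [← hi]
    exact key2 (s i) (β i) (hs i)
  have := prodlem _ hne hmem
  rw [hg]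
  calc ν (ψ (List.ofFn (fun i => β i * s i * (β i)⁻¹)).prod)
      ≤ (List.ofFn (fun i => β i * s i * (β i)⁻¹)).length * (M + D) := this
    _ = k * (C₀ + ν (ψ 1) + 4 * D) := by
        rw [List.length_ofFn, hM]; ring
end

section
/- Let G be a group, A an abelian group with pseudonorm ν, and ψ: G → A a quasihomomorphism with defect D. If k ≥ 1 and g ∈ G is a product of k commutators, g = ⁅a₁,b₁⁆⋯⁅a_k,b_k⁆ with aᵢ,bᵢ ∈ G, then ν(ψ(g)) ≤ k·(2ν(ψ(1_G)) + 6D). In other words, the restriction of ψ to the commutator subgroup [G,G] is Lipschitz with respect to the commutator length, with Lipschitz constant at most 2ν(ψ(1_G)) + 6D. -/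
open scoped commutatorElement

theorem quasihom_lipschitz_commutator_length
    {G : Type*} [Group G] {A : Type*} [AddCommGroup A]
    (ν : A → ℝ)
    (hν_nonneg : ∀ a, 0 ≤ ν a)
    (hν_neg : ∀ a, ν (-a) = ν a)
    (hν_add : ∀ a b, ν (a + b) ≤ ν a + ν b)
    (ψ : G → A) (D : ℝ) (hD : 0 ≤ D)
    (hψ : ∀ g h : G, ν (ψ g - ψ (g * h) + ψ h) ≤ D) :
    ∀ (k : ℕ), 1 ≤ k → ∀ (a b : Fin k → G),
      ∀ g : G, g = (List.ofFn (fun i => ⁅a i, b i⁆)).prod →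
      ν (ψ g) ≤ k * (2 * ν (ψ 1) + 6 * D) := by
  -- multiplicativity up to D
  have hmul : ∀ g h : G, ν (ψ (g * h) - (ψ g + ψ h)) ≤ D := by
    intro g h
    have e : ψ (g * h) - (ψ g + ψ h) = -(ψ g - ψ (g * h) + ψ h) := by abel
    rw [e, hν_neg]; exact hψ g h
  -- inverses up to D
  have hinv : ∀ g : G, ν (ψ g⁻¹ - (ψ 1 - ψ g)) ≤ D := by
    intro g
    have := hmul g g⁻¹
    rw [mul_inv_cancel] at this
    have e : ψ g⁻¹ - (ψ 1 - ψ g) = -(ψ 1 - (ψ g + ψ g⁻¹)) := by abel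
    rw [e, hν_neg]; exact this
  set C : ℝ := 2 * ν (ψ 1) + 5 * D with hC
  -- commutator bound
  have hcomm : ∀ x y : G, ν (ψ ⁅x, y⁆) ≤ C := by
    intro x y
    have e1 := hmul (x * y) (x⁻¹ * y⁻¹)
    have e2 := hmul x y
    have e3 := hmul x⁻¹ y⁻¹
    have e4 := hinv x
    have e5 := hinv y
    have key : ψ ⁅x, y⁆ =
        (ψ (x * y * (x⁻¹ * y⁻¹)) - (ψ (x * y) + ψ (x⁻¹ * y⁻¹)))
        + (ψ (x * y) - (ψ x + ψ y))
        + (ψ (x⁻¹ * y⁻¹) - (ψ x⁻¹ + ψ y⁻¹))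
        + (ψ x⁻¹ - (ψ 1 - ψ x))
        + (ψ y⁻¹ - (ψ 1 - ψ y))
        + (ψ 1 + ψ 1) := by
      have : (⁅x, y⁆ : G) = x * y * (x⁻¹ * y⁻¹) := by
        rw [commutatorElement_def, mul_assoc]
      rw [this]; abel
    calc ν (ψ ⁅x, y⁆) ≤
        ν ((ψ (x * y * (x⁻¹ * y⁻¹)) - (ψ (x * y) + ψ (x⁻¹ * y⁻¹)))
        + (ψ (x * y) - (ψ x + ψ y))
        + (ψ (x⁻¹ * y⁻¹) - (ψ x⁻¹ + ψ y⁻¹))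
        + (ψ x⁻¹ - (ψ 1 - ψ x))
        + (ψ y⁻¹ - (ψ 1 - ψ y)))
        + ν (ψ 1 + ψ 1) := by rw [key]; exact hν_add _ _
      _ ≤ (D + D + D + D + D) + (ν (ψ 1) + ν (ψ 1)) := by
          refine add_le_add ?_ (hν_add _ _)
          exact (hν_add _ _).trans (add_le_add ((hν_add _ _).trans (add_le_add
            ((hν_add _ _).trans (add_le_add ((hν_add _ _).trans
            (add_le_add e1 e2)) e3)) e4)) e5)
      _ ≤ C := by rw [hC]; linarith
  -- list lemma
  have hlist : ∀ l : List G, l ≠ [] → (∀ x ∈ l, ν (ψ x) ≤ C) →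
      ν (ψ l.prod) ≤ l.length * (C + D) := by
    intro l
    induction l with
    | nil => intro h; exact absurd rfl h
    | cons x t ih =>
      intro _ hmem
      rcases eq_or_ne t [] with rfl | ht
      · simpa using (hmem x (by simp)).trans (by linarith)
      · have h1 : ν (ψ (x * t.prod)) ≤ ν (ψ x) + ν (ψ t.prod) + D := by
          have e : ψ (x * t.prod) =
              (ψ (x * t.prod) - (ψ x + ψ t.prod)) + (ψ x + ψ t.prod) := by abel
          calc ν (ψ (x * t.prod))
              = ν ((ψ (x * t.prod) - (ψ x + ψ t.prod)) + (ψ x + ψ t.prod)) :=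
                congrArg ν e
            _ ≤ ν (ψ (x * t.prod) - (ψ x + ψ t.prod))
                + ν (ψ x + ψ t.prod) := hν_add _ _
            _ ≤ D + (ν (ψ x) + ν (ψ t.prod)) := by
                gcongr
                exacts [hmul x t.prod, hν_add _ _]
            _ = ν (ψ x) + ν (ψ t.prod) + D := by ring
        have h2 := ih ht (fun y hy => hmem y (List.mem_cons_of_mem x hy))
        have hx := hmem x (by simp)
        have hlen : (1 : ℝ) ≤ t.length := by
          have : 1 ≤ t.length := List.length_pos_iff.mpr ht
          exact_mod_cast this
        simp only [List.prod_cons, List.length_cons]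
        push_cast
        calc ν (ψ (x * t.prod)) ≤ ν (ψ x) + ν (ψ t.prod) + D := h1
          _ ≤ C + t.length * (C + D) + D := by gcongr
          _ = (t.length + 1) * (C + D) := by ring
  intro k hk a b g hg
  have hle := hlist (List.ofFn (fun i => ⁅a i, b i⁆))
    (by intro h; rw [List.ofFn_eq_nil_iff] at h; omega)
    (by intro x hx; rw [List.mem_ofFn] at hx; obtain ⟨i, rfl⟩ := hx; exact hcomm _ _)
  rw [List.length_ofFn] at hle
  rw [hg]
  refine hle.trans_eq ?_
  rw [hC]; ring
end

section
/- Let G be a group equipped with a conjugation-invariant pseudonorm ν, and let α, Δ ∈ G. If α commutes with its conjugate ΔαΔ⁻¹, then for every natural number n one has ν(⁅α,Δ⁆ⁿ) ≤ 2ν(Δ); that is, the cyclic subgroup generated by ⁅α,Δ⁆ is bounded with respect to ν. -/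
open scoped commutatorElement

theorem bounded_cyclic_of_commuting_conjugate
    {G : Type*} [Group G]
    (ν : G → ℝ)
    (hν_nonneg : ∀ g, 0 ≤ ν g)
    (hν_inv : ∀ g, ν g⁻¹ = ν g)
    (hν_mul : ∀ g h, ν (g * h) ≤ ν g + ν h)
    (hν_conj : ∀ g h, ν (h * g * h⁻¹) = ν g)
    (α Δ : G)
    (hcomm : Commute α (Δ * α * Δ⁻¹)) :
    ∀ n : ℕ, ν (⁅α, Δ⁆ ^ n) ≤ 2 * ν Δ := by
  intro n
  have hkey : ⁅α, Δ⁆ ^ n = (α ^ n * Δ * (α ^ n)⁻¹) * Δ⁻¹ := by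
    have h1 : ⁅α, Δ⁆ = α * (Δ * α * Δ⁻¹)⁻¹ := by
      simp [commutatorElement_def]; group
    have h2 : (α * (Δ * α * Δ⁻¹)⁻¹) ^ n = α ^ n * ((Δ * α * Δ⁻¹)⁻¹) ^ n :=
      (hcomm.inv_right.mul_pow n)
    have h3 : (Δ * α * Δ⁻¹)⁻¹ ^ n = Δ * α⁻¹ ^ n * Δ⁻¹ := by
      rw [show (Δ * α * Δ⁻¹)⁻¹ = Δ * α⁻¹ * Δ⁻¹ by group, conj_pow]
    rw [h1, h2, h3]
    group
  calc ν (⁅α, Δ⁆ ^ n) ≤ ν (α ^ n * Δ * (α ^ n)⁻¹) + ν Δ⁻¹ := by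
        rw [hkey]; exact hν_mul _ _
    _ = ν Δ + ν Δ := by rw [hν_conj, hν_inv]
    _ = 2 * ν Δ := by ring
end

section
/- Let G be a group equipped with a conjugation-invariant pseudonorm ν, and let α, Δ ∈ G. If α is conjugate to its inverse via Δ, i.e. ΔαΔ⁻¹ = α⁻¹, then for every integer n one has ν(αⁿ) ≤ 2ν(Δ) + ν(α); that is, α generates a bounded cyclic subgroup. -/
theorem bounded_cyclic_of_conjugate_to_inverse
    {G : Type*} [Group G]
    (ν : G → ℝ)
    (hν_nonneg : ∀ g, 0 ≤ ν g)
    (hν_inv : ∀ g, ν g⁻¹ = ν g)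
    (hν_mul : ∀ g h, ν (g * h) ≤ ν g + ν h)
    (hν_conj : ∀ g h, ν (h * g * h⁻¹) = ν g)
    (α Δ : G)
    (hconj : Δ * α * Δ⁻¹ = α⁻¹) :
    ∀ n : ℤ, ν (α ^ n) ≤ 2 * ν Δ + ν α := by
  have hconjk : ∀ k : ℤ, Δ * α ^ k * Δ⁻¹ = α ^ (-k) := by
    intro k
    rw [← conj_zpow, hconj, ← zpow_neg_one, ← zpow_mul]
    ring_nf
  have heven : ∀ k : ℤ, ν (α ^ (2 * k)) ≤ 2 * ν Δ := by
    intro k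
    have key : α ^ (2 * k) = (α ^ k * Δ * (α ^ k)⁻¹) * Δ⁻¹ := by
      have h := hconjk (-k)
      rw [neg_neg] at h
      have : Δ * α ^ (-k) * Δ⁻¹ = α ^ k := by
        rw [← h]
      calc α ^ (2 * k) = α ^ k * α ^ k := by rw [two_mul, zpow_add]
        _ = α ^ k * (Δ * α ^ (-k) * Δ⁻¹) := by rw [this]
        _ = (α ^ k * Δ * (α ^ k)⁻¹) * Δ⁻¹ := by
            rw [zpow_neg]; group
    rw [key]
    calc ν ((α ^ k * Δ * (α ^ k)⁻¹) * Δ⁻¹)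
        ≤ ν (α ^ k * Δ * (α ^ k)⁻¹) + ν Δ⁻¹ := hν_mul _ _
      _ = ν Δ + ν Δ := by rw [hν_conj, hν_inv]
      _ = 2 * ν Δ := by ring
  intro n
  rcases Int.even_or_odd n with ⟨k, hk⟩ | ⟨k, hk⟩
  · have := heven k
    rw [hk, ← two_mul] at *
    linarith [hν_nonneg α, heven k]
  · rw [hk, zpow_add, zpow_one]
    calc ν (α ^ (2 * k) * α) ≤ ν (α ^ (2 * k)) + ν α := hν_mul _ _
      _ ≤ 2 * ν Δ + ν α := by linarith [heven k]
end

section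
/- Let G be a group, A an abelian group with pseudonorm ν, and ψ: G → A a quasihomomorphism with defect D such that ν(ψ(1_G)) = 0. Let α ∈ [G,G] be an element of the commutator subgroup, let cl(α^k) denote the commutator length of α^k in G, and set scl(α) := limsup_{k→∞} cl(α^k)/k. Then sν(ψ(α)) ≤ 6D·scl(α) + D, where sν(a) := lim_{k→∞} ν(k·a)/k is the stabilization of ν. In particular, if scl(α) = 0 then sν(ψ(α)) ≤ D. -/
open Filter
open scoped commutatorElement

/-- The commutator length: the minimal number of commutators whose product is `g`
(defined as `sInf` of the set of such numbers; it is `0` junk value if `g` is not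
in the commutator subgroup). -/
noncomputable def commLength {G : Type*} [Group G] (g : G) : ℕ :=
  sInf {k : ℕ | ∃ a b : Fin k → G, g = (List.ofFn fun i => ⁅a i, b i⁆).prod}

/-- The stable commutator length. -/
noncomputable def stableCommLength {G : Type*} [Group G] (g : G) : ℝ :=
  limsup (fun k : ℕ => (commLength (g ^ k) : ℝ) / k) atTop

/-- Fin-indexed representations correspond to lists of commutators. -/
lemma commRep_iff_list {G : Type*} [Group G] (g : G) (k : ℕ) :
    (∃ a b : Fin k → G, g = (List.ofFn fun i => ⁅a i, b i⁆).prod) ↔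
    ∃ l : List G, l.length = k ∧ (∀ x ∈ l, ∃ a b : G, x = ⁅a, b⁆) ∧ g = l.prod := by
  constructor
  · rintro ⟨a, b, rfl⟩
    refine ⟨List.ofFn fun i => ⁅a i, b i⁆, by simp, ?_, rfl⟩
    intro x hx
    rw [List.mem_ofFn] at hx
    obtain ⟨i, rfl⟩ := hx
    exact ⟨a i, b i, rfl⟩
  · rintro ⟨l, rfl, hl, rfl⟩
    have h : ∀ i : Fin l.length, ∃ a b : G, l.get i = ⁅a, b⁆ :=
      fun i => hl (l.get i) (List.get_mem l i)
    choose a b hab using h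
    refine ⟨a, b, ?_⟩
    have : (List.ofFn fun i => ⁅a i, b i⁆) = List.ofFn l.get := by
      congr 1
      funext i
      exact (hab i).symm
    rw [this, List.ofFn_get]

lemma exists_list_of_mem_commutator {G : Type*} [Group G] {g : G}
    (hg : g ∈ commutator G) :
    ∃ l : List G, (∀ x ∈ l, ∃ a b : G, x = ⁅a, b⁆) ∧ g = l.prod := by
  rw [commutator_eq_closure] at hg
  have hg' : g ∈ Submonoid.closure (commutatorSet G ∪ (commutatorSet G)⁻¹) := by
    rw [← Subgroup.closure_toSubmonoid]
    exact hg
  obtain ⟨l, hl, hprod⟩ := Submonoid.exists_list_of_mem_closure hg'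
  refine ⟨l, ?_, hprod.symm⟩
  intro x hx
  rcases hl x hx with h | h
  · obtain ⟨a, b, hab⟩ := h
    exact ⟨a, b, hab.symm⟩
  · obtain ⟨a, b, hab⟩ := Set.mem_inv.mp h
    exact ⟨b, a, by rw [← commutatorElement_inv, hab, inv_inv]⟩

lemma commRep_nonempty {G : Type*} [Group G] {g : G} (hg : g ∈ commutator G) :
    {k : ℕ | ∃ a b : Fin k → G, g = (List.ofFn fun i => ⁅a i, b i⁆).prod}.Nonempty := by
  obtain ⟨l, hl, hprod⟩ := exists_list_of_mem_commutator hg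
  exact ⟨l.length, (commRep_iff_list g l.length).mpr ⟨l, rfl, hl, hprod⟩⟩

/-- `commLength` is realised by a list of commutators. -/
lemma commLength_spec {G : Type*} [Group G] {g : G} (hg : g ∈ commutator G) :
    ∃ l : List G, l.length = commLength g ∧ (∀ x ∈ l, ∃ a b : G, x = ⁅a, b⁆) ∧
      g = l.prod := by
  have := Nat.sInf_mem (commRep_nonempty hg)
  exact (commRep_iff_list g (commLength g)).mp this

lemma commLength_le {G : Type*} [Group G] {g : G} {l : List G}
    (hl : ∀ x ∈ l, ∃ a b : G, x = ⁅a, b⁆) (hg : g = l.prod) :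
    commLength g ≤ l.length :=
  Nat.sInf_le ((commRep_iff_list g l.length).mpr ⟨l, rfl, hl, hg⟩)

lemma commLength_pow_le {G : Type*} [Group G] {α : G} (hα : α ∈ commutator G) (k : ℕ) :
    commLength (α ^ k) ≤ k * commLength α := by
  obtain ⟨l, hlen, hl, hprod⟩ := commLength_spec hα
  have hmem : ∀ x ∈ (List.replicate k l).flatten, ∃ a b : G, x = ⁅a, b⁆ := by
    intro x hx
    rw [List.mem_flatten] at hx
    obtain ⟨l', hl', hx⟩ := hx
    rw [List.eq_of_mem_replicate hl'] at hx
    exact x |> fun _ => hl x hx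
  have hprod' : α ^ k = (List.replicate k l).flatten.prod := by
    rw [List.prod_flatten, List.map_replicate, List.prod_replicate, hprod]
  have := commLength_le hmem hprod'
  calc commLength (α ^ k) ≤ (List.replicate k l).flatten.length := this
    _ = k * commLength α := by
        rw [List.length_flatten, List.map_replicate, List.sum_replicate, smul_eq_mul, hlen]

theorem quasihom_stable_norm_le_scl
    {G : Type*} [Group G] {A : Type*} [AddCommGroup A]
    (ν : A → ℝ)
    (hν_nonneg : ∀ a, 0 ≤ ν a)
    (hν_neg : ∀ a, ν (-a) = ν a)
    (hν_add : ∀ a b, ν (a + b) ≤ ν a + ν b)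
    (ψ : G → A) (D : ℝ) (hD : 0 ≤ D)
    (hψ : ∀ g h : G, ν (ψ g - ψ (g * h) + ψ h) ≤ D)
    (hψ1 : ν (ψ 1) = 0)
    (α : G) (hα : α ∈ commutator G) :
    ∀ L : ℝ, Tendsto (fun k : ℕ => ν (k • ψ α) / k) atTop (nhds L) →
      L ≤ 6 * D * stableCommLength α + D := by
  intro L hL
  -- defect in symmetric forms
  have defect1 : ∀ g h : G, ν (ψ (g * h) - ψ g - ψ h) ≤ D := by
    intro g h
    have := hψ g h
    rw [← hν_neg]
    calc ν (-(ψ (g * h) - ψ g - ψ h)) = ν (ψ g - ψ (g * h) + ψ h) := by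
          congr 1; abel
      _ ≤ D := this
  have defect2 : ∀ g h : G, ν (ψ g + ψ h - ψ (g * h)) ≤ D := by
    intro g h
    calc ν (ψ g + ψ h - ψ (g * h)) = ν (ψ g - ψ (g * h) + ψ h) := by congr 1; abel
      _ ≤ D := hψ g h
  have hinv : ∀ g : G, ν (ψ g + ψ g⁻¹) ≤ D := by
    intro g
    have h1 := hψ g g⁻¹
    rw [mul_inv_cancel] at h1
    calc ν (ψ g + ψ g⁻¹) = ν ((ψ g - ψ 1 + ψ g⁻¹) + ψ 1) := by congr 1; abel
      _ ≤ ν (ψ g - ψ 1 + ψ g⁻¹) + ν (ψ 1) := hν_add _ _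
      _ ≤ D + 0 := add_le_add h1 (le_of_eq hψ1)
      _ = D := add_zero D
  -- bound on a single commutator
  have hcomm : ∀ a b : G, ν (ψ ⁅a, b⁆) ≤ 5 * D := by
    intro a b
    have hw : ⁅a, b⁆ = (a * b) * (a⁻¹ * b⁻¹) := by
      rw [commutatorElement_def]; group
    have key : ψ ⁅a, b⁆ =
        (ψ ((a * b) * (a⁻¹ * b⁻¹)) - ψ (a * b) - ψ (a⁻¹ * b⁻¹))
        + (ψ (a * b) - ψ a - ψ b)
        + (ψ (a⁻¹ * b⁻¹) - ψ a⁻¹ - ψ b⁻¹)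
        + (ψ a + ψ a⁻¹) + (ψ b + ψ b⁻¹) := by
      rw [hw]; abel
    calc ν (ψ ⁅a, b⁆)
        ≤ ν ((ψ ((a * b) * (a⁻¹ * b⁻¹)) - ψ (a * b) - ψ (a⁻¹ * b⁻¹))
            + (ψ (a * b) - ψ a - ψ b)
            + (ψ (a⁻¹ * b⁻¹) - ψ a⁻¹ - ψ b⁻¹)
            + (ψ a + ψ a⁻¹)) + ν (ψ b + ψ b⁻¹) := by rw [key]; exact hν_add _ _
      _ ≤ (ν ((ψ ((a * b) * (a⁻¹ * b⁻¹)) - ψ (a * b) - ψ (a⁻¹ * b⁻¹))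
            + (ψ (a * b) - ψ a - ψ b)
            + (ψ (a⁻¹ * b⁻¹) - ψ a⁻¹ - ψ b⁻¹)) + ν (ψ a + ψ a⁻¹)) + ν (ψ b + ψ b⁻¹) :=
          add_le_add (hν_add _ _) le_rfl
      _ ≤ ((ν ((ψ ((a * b) * (a⁻¹ * b⁻¹)) - ψ (a * b) - ψ (a⁻¹ * b⁻¹))
            + (ψ (a * b) - ψ a - ψ b)) + ν (ψ (a⁻¹ * b⁻¹) - ψ a⁻¹ - ψ b⁻¹))
            + ν (ψ a + ψ a⁻¹)) + ν (ψ b + ψ b⁻¹) := by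
          gcongr; exact hν_add _ _
      _ ≤ (((ν (ψ ((a * b) * (a⁻¹ * b⁻¹)) - ψ (a * b) - ψ (a⁻¹ * b⁻¹))
            + ν (ψ (a * b) - ψ a - ψ b)) + ν (ψ (a⁻¹ * b⁻¹) - ψ a⁻¹ - ψ b⁻¹))
            + ν (ψ a + ψ a⁻¹)) + ν (ψ b + ψ b⁻¹) := by
          gcongr; exact hν_add _ _
      _ ≤ (((D + D) + D) + D) + D := by
          gcongr
          · exact defect1 _ _
          · exact defect1 _ _
          · exact defect1 _ _
          · exact hinv _
          · exact hinv _
      _ = 5 * D := by ring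
  -- bound on a product of commutators
  have hprodlem : ∀ l : List G, (∀ x ∈ l, ∃ a b : G, x = ⁅a, b⁆) →
      ν (ψ l.prod) ≤ 6 * l.length * D := by
    intro l
    induction l with
    | nil => intro _; simpa using le_of_eq hψ1
    | cons x l ih =>
      intro hl
      have hx : ν (ψ x) ≤ 5 * D := by
        obtain ⟨a, b, rfl⟩ := hl x (List.mem_cons_self)
        exact hcomm a b
      have hl' : ν (ψ l.prod) ≤ 6 * l.length * D :=
        ih fun y hy => hl y (List.mem_cons_of_mem x hy)
      have key : ψ (x :: l).prod =
          (ψ (x * l.prod) - ψ x - ψ l.prod) + ψ x + ψ l.prod := by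
        rw [List.prod_cons]; abel
      calc ν (ψ (x :: l).prod)
          ≤ ν ((ψ (x * l.prod) - ψ x - ψ l.prod) + ψ x) + ν (ψ l.prod) := by
            rw [key]; exact hν_add _ _
        _ ≤ (ν (ψ (x * l.prod) - ψ x - ψ l.prod) + ν (ψ x)) + ν (ψ l.prod) :=
            add_le_add (hν_add _ _) le_rfl
        _ ≤ (D + 5 * D) + 6 * l.length * D := by
            gcongr
            exact defect1 _ _
        _ ≤ 6 * (x :: l).length * D := by
            rw [List.length_cons]
            push_cast
            nlinarith [hD]
  -- bound on ν (ψ (α ^ k))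
  have hpowbound : ∀ k : ℕ, ν (ψ (α ^ k)) ≤ 6 * (commLength (α ^ k) : ℝ) * D := by
    intro k
    obtain ⟨l, hlen, hl, hprod⟩ := commLength_spec ((commutator G).pow_mem hα k)
    calc ν (ψ (α ^ k)) = ν (ψ l.prod) := by rw [hprod]
      _ ≤ 6 * l.length * D := hprodlem l hl
      _ = 6 * (commLength (α ^ k) : ℝ) * D := by rw [hlen]
  -- ν (k • ψ α - ψ (α ^ k)) ≤ k * D
  have hsmul : ∀ k : ℕ, ν (k • ψ α - ψ (α ^ k)) ≤ k * D := by
    intro k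
    induction k with
    | zero => simp [hν_neg, hψ1]
    | succ k ih =>
      have key : (k + 1) • ψ α - ψ (α ^ (k + 1)) =
          (k • ψ α - ψ (α ^ k)) + (ψ (α ^ k) + ψ α - ψ (α ^ k * α)) := by
        rw [succ_nsmul, pow_succ]; abel
      calc ν ((k + 1) • ψ α - ψ (α ^ (k + 1)))
          ≤ ν (k • ψ α - ψ (α ^ k)) + ν (ψ (α ^ k) + ψ α - ψ (α ^ k * α)) := by
            rw [key]; exact hν_add _ _
        _ ≤ k * D + D := add_le_add ih (defect2 _ _)
        _ = (↑(k + 1) : ℝ) * D := by push_cast; ring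
  -- main bound : ν (k • ψ α) ≤ 6 * cl(α^k) * D + k * D
  have hmain : ∀ k : ℕ, ν (k • ψ α) ≤ 6 * (commLength (α ^ k) : ℝ) * D + k * D := by
    intro k
    calc ν (k • ψ α) = ν ((k • ψ α - ψ (α ^ k)) + ψ (α ^ k)) := by rw [sub_add_cancel]
      _ ≤ ν (k • ψ α - ψ (α ^ k)) + ν (ψ (α ^ k)) := hν_add _ _
      _ ≤ k * D + 6 * (commLength (α ^ k) : ℝ) * D := add_le_add (hsmul k) (hpowbound k)
      _ = 6 * (commLength (α ^ k) : ℝ) * D + k * D := by ring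
  -- limsup machinery
  set u : ℕ → ℝ := fun k => (commLength (α ^ k) : ℝ) / k with hu
  have hub : ∀ k, u k ≤ (commLength α : ℝ) := by
    intro k
    rcases Nat.eq_zero_or_pos k with rfl | hk
    · simp [hu]
    · have hkpos : (0 : ℝ) < k := by exact_mod_cast hk
      rw [hu]
      rw [div_le_iff₀ hkpos]
      have := commLength_pow_le hα k
      calc ((commLength (α ^ k) : ℝ)) ≤ ((k * commLength α : ℕ) : ℝ) := by exact_mod_cast this
        _ = (commLength α : ℝ) * k := by push_cast; ring
  have hbd : IsBoundedUnder (· ≤ ·) atTop u := isBoundedUnder_of ⟨(commLength α : ℝ), hub⟩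
  have hS : stableCommLength α = limsup u atTop := rfl
  refine le_of_forall_pos_le_add ?_
  intro ε hε
  set ε' : ℝ := ε / (6 * D + 1) with hε'def
  have h6D : (0 : ℝ) < 6 * D + 1 := by linarith
  have hε' : 0 < ε' := div_pos hε h6D
  have hlt : limsup u atTop < stableCommLength α + ε' := by
    rw [← hS]; linarith
  have hev : ∀ᶠ k in atTop, u k < stableCommLength α + ε' :=
    eventually_lt_of_limsup_lt hlt hbd
  have hev2 : ∀ᶠ k : ℕ in atTop, ν (k • ψ α) / k ≤ 6 * D * (stableCommLength α + ε') + D := by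
    filter_upwards [hev, eventually_ge_atTop 1] with k hk hk1
    have hkpos : (0 : ℝ) < k := by exact_mod_cast hk1
    have hud : u k * k = (commLength (α ^ k) : ℝ) := by
      rw [hu]
      exact div_mul_cancel₀ _ (ne_of_gt hkpos)
    have h1 : ν (k • ψ α) ≤ (6 * D * u k + D) * k := by
      calc ν (k • ψ α) ≤ 6 * (commLength (α ^ k) : ℝ) * D + k * D := hmain k
        _ = (6 * D * u k + D) * k := by rw [← hud]; ring
    have h2 : ν (k • ψ α) / k ≤ 6 * D * u k + D := by
      rw [div_le_iff₀ hkpos]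
      exact h1
    have h3 : 6 * D * u k ≤ 6 * D * (stableCommLength α + ε') := by
      apply mul_le_mul_of_nonneg_left hk.le
      linarith
    linarith
  have hL' : L ≤ 6 * D * (stableCommLength α + ε') + D := le_of_tendsto hL hev2
  have heps : (6 * D + 1) * ε' = ε := by
    rw [hε'def]
    field_simp
  have hfin : 6 * D * ε' ≤ ε := by
    calc 6 * D * ε' ≤ (6 * D + 1) * ε' := by
          apply mul_le_mul_of_nonneg_right (by linarith) (le_of_lt hε')
      _ = ε := heps
  have hexp : 6 * D * (stableCommLength α + ε') + D
      = 6 * D * stableCommLength α + D + 6 * D * ε' := by ring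
  rw [hexp] at hL'
  linarith [hL']
end

section
/- Let B₃ be the braid group on 3 strands, presented with generators σ₁, σ₂ and the relation σ₁σ₂σ₁ = σ₂σ₁σ₂. Then for every natural number n, the element (σ₁σ₂⁻¹)ⁿ can be written as a product of at most 8 elements of B₃, each of which is a conjugate of σ₁ or of σ₁⁻¹. Consequently the cyclic subgroup generated by σ₁σ₂⁻¹ is bounded by 8 in the biinvariant word norm of B₃ associated to the normally generating set {σ₁, σ₁⁻¹}. -/
/-- The single braid relator of the braid group on 3 strands. -/
def braidRels3 : Set (FreeGroup (Fin 2)) :=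
  {FreeGroup.of 0 * FreeGroup.of 1 * FreeGroup.of 0 *
    (FreeGroup.of 1)⁻¹ * (FreeGroup.of 0)⁻¹ * (FreeGroup.of 1)⁻¹}

/-- The braid group on 3 strands as a presented group. -/
abbrev BraidGroup3 : Type := PresentedGroup braidRels3

lemma braid3_list_to_fn {G : Type*} [Monoid G] (P : G → Prop) (l : List G) (g : G)
    (hl : l.length ≤ 8) (hP : ∀ x ∈ l, P x) (hg : g = l.prod) :
    ∃ k, k ≤ 8 ∧ ∃ s : Fin k → G, (∀ i, P (s i)) ∧ g = (List.ofFn s).prod :=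
  ⟨l.length, hl, l.get, fun i => hP _ (List.get_mem l i), by rwa [List.ofFn_get]⟩

theorem braid3_bounded_cyclic_subgroup :
    ∀ σ₁ σ₂ : BraidGroup3,
      σ₁ = PresentedGroup.of 0 → σ₂ = PresentedGroup.of 1 →
      ∀ n : ℕ, ∃ (k : ℕ), k ≤ 8 ∧ ∃ s : Fin k → BraidGroup3,
        (∀ i, (∃ β : BraidGroup3, s i = β * σ₁ * β⁻¹) ∨
              (∃ β : BraidGroup3, s i = β * σ₁⁻¹ * β⁻¹)) ∧
        (σ₁ * σ₂⁻¹) ^ n = (List.ofFn s).prod := by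
  intro σ₁ σ₂ h1 h2 n
  -- the braid relation
  have hrel : σ₁ * σ₂ * σ₁ * σ₂⁻¹ * σ₁⁻¹ * σ₂⁻¹ = (1 : BraidGroup3) := by
    subst h1 h2
    have : ((QuotientGroup.mk (FreeGroup.of 0 * FreeGroup.of 1 * FreeGroup.of 0 *
        (FreeGroup.of 1)⁻¹ * (FreeGroup.of 0)⁻¹ * (FreeGroup.of 1)⁻¹ :
        FreeGroup (Fin 2))) : BraidGroup3) = 1 := by
      rw [QuotientGroup.eq_one_iff]
      exact Subgroup.subset_normalClosure (by simp [braidRels3])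
    exact this
  clear h1 h2
  have hbr : σ₁ * σ₂ * σ₁ = σ₂ * σ₁ * σ₂ := by
    rw [← mul_inv_eq_one]
    calc σ₁ * σ₂ * σ₁ * (σ₂ * σ₁ * σ₂)⁻¹
        = σ₁ * σ₂ * σ₁ * σ₂⁻¹ * σ₁⁻¹ * σ₂⁻¹ := by group
      _ = 1 := hrel
  have hσ₂ : σ₂ = (σ₁ * σ₂) * σ₁ * (σ₁ * σ₂)⁻¹ := by
    rw [hbr]; group
  have conjA : ∀ c : BraidGroup3, ∃ β : BraidGroup3, c * σ₂ * c⁻¹ = β * σ₁ * β⁻¹ := by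
    intro c
    refine ⟨c * (σ₁ * σ₂), ?_⟩
    calc c * σ₂ * c⁻¹ = c * ((σ₁ * σ₂) * σ₁ * (σ₁ * σ₂)⁻¹) * c⁻¹ := by rw [← hσ₂]
      _ = (c * (σ₁ * σ₂)) * σ₁ * (c * (σ₁ * σ₂))⁻¹ := by group
  have conjB : ∀ c : BraidGroup3, ∃ β : BraidGroup3, c * σ₂⁻¹ * c⁻¹ = β * σ₁⁻¹ * β⁻¹ := by
    intro c
    refine ⟨c * (σ₁ * σ₂), ?_⟩
    conv_lhs => rw [hσ₂]
    group
  -- semiconjugation by Δ = σ₁σ₂σ₁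
  have hsc : SemiconjBy (σ₁ * σ₂ * σ₁) (σ₁ * σ₂⁻¹)⁻¹ (σ₁ * σ₂⁻¹) := by
    show (σ₁ * σ₂ * σ₁) * (σ₁ * σ₂⁻¹)⁻¹ = (σ₁ * σ₂⁻¹) * (σ₁ * σ₂ * σ₁)
    calc (σ₁ * σ₂ * σ₁) * (σ₁ * σ₂⁻¹)⁻¹
        = σ₁ * (σ₂ * σ₁ * σ₂) * σ₁⁻¹ := by group
      _ = σ₁ * (σ₁ * σ₂ * σ₁) * σ₁⁻¹ := by rw [hbr]
      _ = (σ₁ * σ₂⁻¹) * (σ₂ * σ₁ * σ₂) := by group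
      _ = (σ₁ * σ₂⁻¹) * (σ₁ * σ₂ * σ₁) := by rw [hbr]
  have key : ∀ m : ℕ, (σ₁ * σ₂⁻¹) ^ (m + m)
      = (σ₁ * σ₂⁻¹) ^ m * ((σ₁ * σ₂ * σ₁) * ((σ₁ * σ₂⁻¹) ^ m)⁻¹ * (σ₁ * σ₂ * σ₁)⁻¹) := by
    intro m
    have h := (hsc.pow_right m).eq
    rw [inv_pow] at h
    rw [pow_add]
    congr 1
    rw [h]
    group
  rcases Nat.even_or_odd n with ⟨m, hm⟩ | ⟨m, hm⟩
  · -- even case: 6 conjugates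
    set b : BraidGroup3 := (σ₁ * σ₂⁻¹) ^ m with hb
    obtain ⟨β₂, hβ₂⟩ := conjA b
    obtain ⟨β₅, hβ₅⟩ := conjB (1 : BraidGroup3)
    refine braid3_list_to_fn
      (fun x => (∃ β : BraidGroup3, x = β * σ₁ * β⁻¹) ∨ (∃ β : BraidGroup3, x = β * σ₁⁻¹ * β⁻¹))
      [b * σ₁ * b⁻¹, b * σ₂ * b⁻¹, b * σ₁ * b⁻¹, σ₁⁻¹, σ₂⁻¹, σ₁⁻¹] _ (by norm_num) ?_ ?_
    · intro x hx
      fin_cases hx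
      · exact Or.inl ⟨b, rfl⟩
      · exact Or.inl ⟨β₂, hβ₂⟩
      · exact Or.inl ⟨b, rfl⟩
      · exact Or.inr ⟨1, by group⟩
      · exact Or.inr ⟨β₅, by simpa using hβ₅⟩
      · exact Or.inr ⟨1, by group⟩
    · rw [hm, key m, ← hb]
      simp only [List.prod_cons, List.prod_nil, mul_one]
      group
  · -- odd case: 8 conjugates
    set b : BraidGroup3 := (σ₁ * σ₂⁻¹) ^ m with hb
    obtain ⟨β₂, hβ₂⟩ := conjA b
    obtain ⟨β₅, hβ₅⟩ := conjB (1 : BraidGroup3)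
    obtain ⟨β₈, hβ₈⟩ := conjB (1 : BraidGroup3)
    refine braid3_list_to_fn
      (fun x => (∃ β : BraidGroup3, x = β * σ₁ * β⁻¹) ∨ (∃ β : BraidGroup3, x = β * σ₁⁻¹ * β⁻¹))
      [b * σ₁ * b⁻¹, b * σ₂ * b⁻¹, b * σ₁ * b⁻¹, σ₁⁻¹, σ₂⁻¹, σ₁⁻¹, σ₁, σ₂⁻¹] _
      (by norm_num) ?_ ?_
    · intro x hx
      fin_cases hx
      · exact Or.inl ⟨b, rfl⟩
      · exact Or.inl ⟨β₂, hβ₂⟩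
      · exact Or.inl ⟨b, rfl⟩
      · exact Or.inr ⟨1, by group⟩
      · exact Or.inr ⟨β₅, by simpa using hβ₅⟩
      · exact Or.inr ⟨1, by group⟩
      · exact Or.inl ⟨1, by group⟩
      · exact Or.inr ⟨β₈, by simpa using hβ₈⟩
    · have hn : n = (m + m) + 1 := by omega
      rw [hn, pow_succ, key m, ← hb]
      simp only [List.prod_cons, List.prod_nil, mul_one]
      group
end

section
/- Let B₄ be the braid group on 4 strands, presented with generators σ₁, σ₂, σ₃ and relations σ₁σ₂σ₁ = σ₂σ₁σ₂, σ₂σ₃σ₂ = σ₃σ₂σ₃, and σ₁σ₃ = σ₃σ₁. Then for every natural number n, the element (σ₁σ₃⁻¹)ⁿ can be written as a product of at most 10 elements of B₄, each of which is a conjugate of σ₁ or of σ₁⁻¹. Consequently the cyclic subgroup generated by σ₁σ₃⁻¹ is bounded by 10 in the biinvariant word norm of B₄ associated to the normally generating set {σ₁, σ₁⁻¹}. -/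
/-- The braid relators of the braid group on 4 strands. -/
def braidRels4 : Set (FreeGroup (Fin 3)) :=
  { FreeGroup.of 0 * FreeGroup.of 1 * FreeGroup.of 0 *
      (FreeGroup.of 1)⁻¹ * (FreeGroup.of 0)⁻¹ * (FreeGroup.of 1)⁻¹,
    FreeGroup.of 1 * FreeGroup.of 2 * FreeGroup.of 1 *
      (FreeGroup.of 2)⁻¹ * (FreeGroup.of 1)⁻¹ * (FreeGroup.of 2)⁻¹,
    FreeGroup.of 0 * FreeGroup.of 2 * (FreeGroup.of 0)⁻¹ * (FreeGroup.of 2)⁻¹ }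

/-- The braid group on 4 strands as a presented group. -/
abbrev BraidGroup4 : Type := PresentedGroup braidRels4

lemma conj_inv_eq' {G : Type*} [Group G] {β x y : G} (h : β * x * β⁻¹ = y) :
    β * x⁻¹ * β⁻¹ = y⁻¹ := by rw [← h]; group

lemma braidRels4_eq_one {r : FreeGroup (Fin 3)} (hr : r ∈ braidRels4) :
    PresentedGroup.mk braidRels4 r = 1 :=
  (QuotientGroup.eq_one_iff r).mpr (Subgroup.subset_normalClosure hr)

lemma braid4_rel12 :
    (PresentedGroup.of 0 : BraidGroup4) * PresentedGroup.of 1 * PresentedGroup.of 0 =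
      PresentedGroup.of 1 * PresentedGroup.of 0 * PresentedGroup.of 1 := by
  have h := braidRels4_eq_one (r := FreeGroup.of 0 * FreeGroup.of 1 * FreeGroup.of 0 *
      (FreeGroup.of 1)⁻¹ * (FreeGroup.of 0)⁻¹ * (FreeGroup.of 1)⁻¹) (by left; rfl)
  simp only [map_mul, map_inv] at h
  set m0 : BraidGroup4 := PresentedGroup.mk braidRels4 (FreeGroup.of 0)
  set m1 : BraidGroup4 := PresentedGroup.mk braidRels4 (FreeGroup.of 1)
  show m0 * m1 * m0 = m1 * m0 * m1
  have h2 : (m0 * m1 * m0) * (m1 * m0 * m1)⁻¹ = 1 := by rw [← h]; group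
  exact mul_inv_eq_one.mp h2

lemma braid4_rel23 :
    (PresentedGroup.of 1 : BraidGroup4) * PresentedGroup.of 2 * PresentedGroup.of 1 =
      PresentedGroup.of 2 * PresentedGroup.of 1 * PresentedGroup.of 2 := by
  have h := braidRels4_eq_one (r := FreeGroup.of 1 * FreeGroup.of 2 * FreeGroup.of 1 *
      (FreeGroup.of 2)⁻¹ * (FreeGroup.of 1)⁻¹ * (FreeGroup.of 2)⁻¹) (by right; left; rfl)
  simp only [map_mul, map_inv] at h
  set m1 : BraidGroup4 := PresentedGroup.mk braidRels4 (FreeGroup.of 1)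
  set m2 : BraidGroup4 := PresentedGroup.mk braidRels4 (FreeGroup.of 2)
  show m1 * m2 * m1 = m2 * m1 * m2
  have h2 : (m1 * m2 * m1) * (m2 * m1 * m2)⁻¹ = 1 := by rw [← h]; group
  exact mul_inv_eq_one.mp h2

lemma braid4_rel13 :
    (PresentedGroup.of 0 : BraidGroup4) * PresentedGroup.of 2 =
      PresentedGroup.of 2 * PresentedGroup.of 0 := by
  have h := braidRels4_eq_one (r := FreeGroup.of 0 * FreeGroup.of 2 *
      (FreeGroup.of 0)⁻¹ * (FreeGroup.of 2)⁻¹) (by right; right; rfl)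
  simp only [map_mul, map_inv] at h
  set m0 : BraidGroup4 := PresentedGroup.mk braidRels4 (FreeGroup.of 0)
  set m2 : BraidGroup4 := PresentedGroup.mk braidRels4 (FreeGroup.of 2)
  show m0 * m2 = m2 * m0
  have h2 : (m0 * m2) * (m2 * m0)⁻¹ = 1 := by rw [← h]; group
  exact mul_inv_eq_one.mp h2

theorem braid4_bounded_cyclic_subgroup :
    ∀ σ₁ σ₃ : BraidGroup4,
      σ₁ = PresentedGroup.of 0 → σ₃ = PresentedGroup.of 2 →
      ∀ n : ℕ, ∃ (k : ℕ), k ≤ 10 ∧ ∃ s : Fin k → BraidGroup4,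
        (∀ i, (∃ β : BraidGroup4, s i = β * σ₁ * β⁻¹) ∨
              (∃ β : BraidGroup4, s i = β * σ₁⁻¹ * β⁻¹)) ∧
        (σ₁ * σ₃⁻¹) ^ n = (List.ofFn s).prod := by
  intro σ₁ σ₃ h1 h3 n
  subst h1 h3
  set a : BraidGroup4 := PresentedGroup.of 0 with ha
  set b : BraidGroup4 := PresentedGroup.of 1 with hb
  set c : BraidGroup4 := PresentedGroup.of 2 with hc
  have r12 : a * b * a = b * a * b := braid4_rel12
  have r23 : b * c * b = c * b * c := braid4_rel23
  have r13 : a * c = c * a := braid4_rel13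
  have hbconj : (a * b) * a * (a * b)⁻¹ = b := by
    have e : (a * b) * a * (a * b)⁻¹ = (a * b * a) * (a * b)⁻¹ := by group
    rw [e, r12]; group
  have hcconj : (b * c) * b * (b * c)⁻¹ = c := by
    have e : (b * c) * b * (b * c)⁻¹ = (b * c * b) * (b * c)⁻¹ := by group
    rw [e, r23]; group
  have hw : ((b * c) * (a * b)) * a * ((b * c) * (a * b))⁻¹ = c := by
    have e : ((b * c) * (a * b)) * a * ((b * c) * (a * b))⁻¹
        = (b * c) * ((a * b) * a * (a * b)⁻¹) * (b * c)⁻¹ := by group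
    rw [e, hbconj, hcconj]
  refine ⟨8, by norm_num, ![a ^ n * b * (a ^ n)⁻¹, a ^ n * c * (a ^ n)⁻¹, a,
    a ^ n * b * (a ^ n)⁻¹, b⁻¹, a⁻¹, c⁻¹, b⁻¹], ?_, ?_⟩
  · intro i
    fin_cases i
    · refine Or.inl ⟨a ^ n * (a * b), ?_⟩
      show a ^ n * b * (a ^ n)⁻¹ = a ^ n * (a * b) * a * (a ^ n * (a * b))⁻¹
      rw [show a ^ n * (a * b) * a * (a ^ n * (a * b))⁻¹
          = a ^ n * ((a * b) * a * (a * b)⁻¹) * (a ^ n)⁻¹ from by group, hbconj]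
    · refine Or.inl ⟨a ^ n * ((b * c) * (a * b)), ?_⟩
      show a ^ n * c * (a ^ n)⁻¹
          = a ^ n * ((b * c) * (a * b)) * a * (a ^ n * ((b * c) * (a * b)))⁻¹
      rw [show a ^ n * ((b * c) * (a * b)) * a * (a ^ n * ((b * c) * (a * b)))⁻¹
          = a ^ n * (((b * c) * (a * b)) * a * ((b * c) * (a * b))⁻¹) * (a ^ n)⁻¹
          from by group, hw]
    · refine Or.inl ⟨1, ?_⟩
      show a = 1 * a * 1⁻¹
      group
    · refine Or.inl ⟨a ^ n * (a * b), ?_⟩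
      show a ^ n * b * (a ^ n)⁻¹ = a ^ n * (a * b) * a * (a ^ n * (a * b))⁻¹
      rw [show a ^ n * (a * b) * a * (a ^ n * (a * b))⁻¹
          = a ^ n * ((a * b) * a * (a * b)⁻¹) * (a ^ n)⁻¹ from by group, hbconj]
    · refine Or.inr ⟨a * b, ?_⟩
      show b⁻¹ = (a * b) * a⁻¹ * (a * b)⁻¹
      exact (conj_inv_eq' hbconj).symm
    · refine Or.inr ⟨1, ?_⟩
      show a⁻¹ = 1 * a⁻¹ * 1⁻¹
      group
    · refine Or.inr ⟨(b * c) * (a * b), ?_⟩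
      show c⁻¹ = ((b * c) * (a * b)) * a⁻¹ * ((b * c) * (a * b))⁻¹
      exact (conj_inv_eq' hw).symm
    · refine Or.inr ⟨a * b, ?_⟩
      show b⁻¹ = (a * b) * a⁻¹ * (a * b)⁻¹
      exact (conj_inv_eq' hbconj).symm
  · have hcomm : Commute a c⁻¹ := by
      have hco : Commute a c := r13
      exact hco.inv_right
    have h1 : (a * c⁻¹) ^ n = a ^ n * (c ^ n)⁻¹ := by
      rw [hcomm.mul_pow, inv_pow]
    have h2 : c ^ n = ((b * c) * (a * b)) * a ^ n * ((b * c) * (a * b))⁻¹ := by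
      rw [← conj_pow, hw]
    rw [h1, h2]
    show a ^ n * (b * c * (a * b) * a ^ n * (b * c * (a * b))⁻¹)⁻¹
        = (a ^ n * b * (a ^ n)⁻¹ * (a ^ n * c * (a ^ n)⁻¹ * (a * (a ^ n * b * (a ^ n)⁻¹ *
            (b⁻¹ * (a⁻¹ * (c⁻¹ * (b⁻¹ * 1))))))))
    group
end

section
/- For all natural numbers m ≥ 1 and n ≥ 2 there exists N ≥ n and an element Δ of the commutator subgroup [B_N, B_N] of the braid group B_N with the following property: letting ι: B_n → B_N be the homomorphism determined by σ_k ↦ σ_k for 1 ≤ k ≤ n−1 (which exists since the Artin relations of B_n are satisfied in B_N), for all integers 0 ≤ i < j ≤ m the sets Δⁱ·ι(B_n)·Δ⁻ⁱ and Δʲ·ι(B_n)·Δ⁻ʲ commute elementwise: for every x, y in the image of ι, (Δⁱ x Δ⁻ⁱ)(Δʲ y Δ⁻ʲ) = (Δʲ y Δ⁻ʲ)(Δⁱ x Δ⁻ⁱ). In particular the image of B_n is strongly m-displaceable in B_N by an element of the commutator subgroup. -/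
/-- The braid relators on `N` strands: `σᵢσⱼ = σⱼσᵢ` for `|i - j| ≥ 2` and
`σᵢσᵢ₊₁σᵢ = σᵢ₊₁σᵢσᵢ₊₁`. -/
def braidRels (N : ℕ) : Set (FreeGroup (Fin (N - 1))) :=
  { r | (∃ i j : Fin (N - 1), (i : ℕ) + 1 < (j : ℕ) ∧
          r = FreeGroup.of i * FreeGroup.of j * (FreeGroup.of i)⁻¹ *
              (FreeGroup.of j)⁻¹) ∨
        (∃ i j : Fin (N - 1), (i : ℕ) + 1 = (j : ℕ) ∧
          r = FreeGroup.of i * FreeGroup.of j * FreeGroup.of i *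
              (FreeGroup.of j)⁻¹ * (FreeGroup.of i)⁻¹ * (FreeGroup.of j)⁻¹) }

/-- The braid group on `N` strands as a presented group. -/
abbrev BraidGroup (N : ℕ) : Type := PresentedGroup (braidRels N)

namespace BraidAux

lemma rel_one {N : ℕ} {r : FreeGroup (Fin (N - 1))} (hr : r ∈ braidRels N) :
    PresentedGroup.mk (braidRels N) r = 1 :=
  (QuotientGroup.eq_one_iff r).mpr (Subgroup.subset_normalClosure hr)

lemma of_comm {N : ℕ} {i j : Fin (N - 1)} (h : (i : ℕ) + 1 < (j : ℕ)) :
    Commute (PresentedGroup.of (rels := braidRels N) i) (PresentedGroup.of j) := by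
  have h1 := rel_one (N := N) (Or.inl ⟨i, j, h, rfl⟩)
  simp only [map_mul, map_inv] at h1
  exact commutatorElement_eq_one_iff_commute.mp h1

lemma of_braid {N : ℕ} {i j : Fin (N - 1)} (h : (i : ℕ) + 1 = (j : ℕ)) :
    PresentedGroup.of (rels := braidRels N) i * PresentedGroup.of j * PresentedGroup.of i =
      PresentedGroup.of j * PresentedGroup.of i * PresentedGroup.of j := by
  have h1 := rel_one (N := N) (Or.inr ⟨i, j, h, rfl⟩)
  simp only [map_mul, map_inv] at h1
  have e : ∀ x : Fin (N - 1),
      PresentedGroup.mk (braidRels N) (FreeGroup.of x) = PresentedGroup.of x := fun _ => rfl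
  simp only [e] at h1
  have h2 := congrArg (· * (PresentedGroup.of (rels := braidRels N) j *
      PresentedGroup.of i * PresentedGroup.of j)) h1
  simpa [mul_assoc] using h2

/-- `Sg N k` is the `k`-th generator (0-indexed) of `BraidGroup N`, or `1` if out of range. -/
def Sg (N : ℕ) (k : ℕ) : BraidGroup N :=
  if h : k < N - 1 then PresentedGroup.of ⟨k, h⟩ else 1

lemma Sg_eq {N k : ℕ} (h : k < N - 1) : Sg N k = PresentedGroup.of ⟨k, h⟩ := dif_pos h

lemma Sg_comm {N k l : ℕ} (h : k + 2 ≤ l) : Commute (Sg N k) (Sg N l) := by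
  unfold Sg
  by_cases hk : k < N - 1
  · by_cases hl : l < N - 1
    · rw [dif_pos hk, dif_pos hl]
      exact of_comm (by simpa using by omega)
    · rw [dif_neg hl]; exact Commute.one_right _
  · rw [dif_neg hk]; exact Commute.one_left _

lemma Sg_braid {N k : ℕ} (h : k + 1 < N - 1) :
    Sg N k * Sg N (k + 1) * Sg N k = Sg N (k + 1) * Sg N k * Sg N (k + 1) := by
  rw [Sg_eq (show k < N - 1 by omega), Sg_eq h]
  exact of_braid rfl

/-- Product of generators with indices in `[a, b)`. -/
def Dd (N a b : ℕ) : BraidGroup N := ((List.range' a (b - a)).map (Sg N)).prod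

lemma comm_Dd {N a b : ℕ} {y : BraidGroup N}
    (h : ∀ j, a ≤ j → j < b → Commute y (Sg N j)) : Commute y (Dd N a b) := by
  apply Commute.list_prod_right
  intro x hx
  simp only [List.mem_map, List.mem_range'_1] at hx
  obtain ⟨j, ⟨hj1, hj2⟩, rfl⟩ := hx
  exact h j hj1 (by omega)

lemma Dd_comm_Dd {N a b a' b' : ℕ} (h : b + 1 ≤ a') :
    Commute (Dd N a b) (Dd N a' b') := by
  apply Commute.list_prod_left
  intro x hx
  simp only [List.mem_map, List.mem_range'_1] at hx
  obtain ⟨j, ⟨hj1, hj2⟩, rfl⟩ := hx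
  exact comm_Dd fun j' hj1' _ => Sg_comm (by omega)

lemma Dd_swap {N a b i : ℕ} (ha : a ≤ i) (hb : i + 1 < b) (hNb : b ≤ N - 1) :
    Dd N a b * Sg N i = Sg N (i + 1) * Dd N a b := by
  have hsplit : List.range' a (b - a) =
      List.range' a (i - a) ++ List.range' i 2 ++ List.range' (i + 2) (b - (i + 2)) := by
    rw [List.append_assoc]
    have s1 : List.range' i 2 ++ List.range' (i + 2) (b - (i + 2)) = List.range' i (b - i) := by
      rw [show b - i = (b - (i + 2)) + 2 by omega]
      exact (List.range'_append_1 (s := i) (m := 2) (n := b - (i + 2))).trans (by rw [Nat.add_comm])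
    have s2 := List.range'_append_1 (s := a) (m := i - a) (n := b - i)
    rw [show a + (i - a) = i by omega, show (i - a) + (b - i) = b - a by omega] at s2
    rw [s1]
    exact s2.symm
  have hD : Dd N a b = Dd N a i * (Sg N i * (Sg N (i + 1) * Dd N (i + 2) b)) := by
    unfold Dd
    rw [hsplit, List.map_append, List.map_append, List.prod_append, List.prod_append]
    have : List.range' i 2 = [i, i + 1] := rfl
    rw [this]
    simp [mul_assoc]
  have c1 : Commute (Sg N i) (Dd N (i + 2) b) :=
    comm_Dd fun j hj _ => Sg_comm (by omega)
  have c2 : Commute (Sg N (i + 1)) (Dd N a i) :=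
    (comm_Dd fun j _ hj => (Sg_comm (show j + 2 ≤ i + 1 by omega)).symm).symm.symm
  have braid' : ∀ X : BraidGroup N, Sg N i * (Sg N (i + 1) * (Sg N i * X)) =
      Sg N (i + 1) * (Sg N i * (Sg N (i + 1) * X)) := by
    intro X
    rw [← mul_assoc, ← mul_assoc, Sg_braid (by omega), mul_assoc, mul_assoc]
  have c2' : ∀ X : BraidGroup N, Dd N a i * (Sg N (i + 1) * X) =
      Sg N (i + 1) * (Dd N a i * X) := by
    intro X
    rw [← mul_assoc, ← c2.eq, mul_assoc]
  rw [hD]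
  simp only [mul_assoc]
  rw [← c1.eq, braid', c2']

end BraidAux

namespace BraidAux2
open BraidAux

lemma Dd_pow_swap {N a b : ℕ} (hNb : b ≤ N - 1) :
    ∀ t k, a ≤ k → k + t < b → (Dd N a b) ^ t * Sg N k = Sg N (k + t) * (Dd N a b) ^ t := by
  intro t
  induction t with
  | zero => intro k _ _; simp
  | succ t ih =>
    intro k hk hkt
    rw [pow_succ, mul_assoc, Dd_swap hk (by omega) hNb, ← mul_assoc,
      ih (k + 1) (by omega) (by omega), mul_assoc, ← pow_succ]
    congr 2
    omega

lemma conj_commute {G : Type*} [Group G] {a b : G} (g : G) (h : Commute a b) :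
    Commute (g * a * g⁻¹) (g * b * g⁻¹) := by
  have e1 : (g * a * g⁻¹) * (g * b * g⁻¹) = g * (a * b) * g⁻¹ := by group
  have e2 : (g * b * g⁻¹) * (g * a * g⁻¹) = g * (b * a) * g⁻¹ := by group
  unfold Commute SemiconjBy
  rw [e1, e2, h.eq]

lemma closure_comm {G : Type*} [Group G] {s t : Set G}
    (hst : ∀ a ∈ s, ∀ b ∈ t, Commute a b) {x y : G}
    (hx : x ∈ Subgroup.closure s) (hy : y ∈ Subgroup.closure t) : Commute x y := by
  refine Subgroup.closure_induction (fun a ha => ?_) (Commute.one_left y)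
    (fun u v _ _ hu hv => hu.mul_left hv) (fun u _ hu => hu.inv_left) hx
  exact Subgroup.closure_induction (fun b hb => hst a ha b hb) (Commute.one_right a)
    (fun u v _ _ h1 h2 => h1.mul_right h2) (fun u _ h1 => h1.inv_right) hy

lemma abel_Sg {N k : ℕ} (h : k + 1 < N - 1) :
    Abelianization.of (Sg N (k + 1)) = Abelianization.of (Sg N k) := by
  have h2 := congrArg Abelianization.of (Sg_braid h)
  simp only [map_mul] at h2
  set a := Abelianization.of (Sg N k)
  set b := Abelianization.of (Sg N (k + 1))
  have h3 : (a * b) * a = (a * b) * b := by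
    calc (a * b) * a = a * b * a := rfl
    _ = b * a * b := h2
    _ = (a * b) * b := by rw [mul_comm b a]
  exact (mul_left_cancel h3).symm

lemma abel_Sg_zero {N : ℕ} : ∀ k, k < N - 1 →
    Abelianization.of (Sg N k) = Abelianization.of (Sg N 0) := by
  intro k
  induction k with
  | zero => intro _; rfl
  | succ k ih => intro hk; rw [abel_Sg (by omega), ih (by omega)]

lemma abel_Dd {N a b : ℕ} (hb : b ≤ N - 1) :
    Abelianization.of (Dd N a b) = Abelianization.of (Sg N 0) ^ (b - a) := by
  unfold Dd
  rw [map_list_prod, List.map_map]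
  rw [List.prod_eq_pow_card _ (Abelianization.of (Sg N 0)) ?_, List.length_map,
    List.length_range']
  intro x hx
  simp only [List.mem_map, List.mem_range'_1, Function.comp_apply] at hx
  obtain ⟨j, ⟨hj1, hj2⟩, rfl⟩ := hx
  exact abel_Sg_zero j (by omega)

end BraidAux2

open BraidAux BraidAux2

theorem braid_strongly_displaceable_by_commutator_element :
    ∀ m n : ℕ, 1 ≤ m → 2 ≤ n →
      ∃ N : ℕ, ∃ hN : n ≤ N, ∃ Δ : BraidGroup N,
        Δ ∈ commutator (BraidGroup N) ∧
        ∃ ι : BraidGroup n →* BraidGroup N,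
          (∀ k : Fin (n - 1),
            ι (PresentedGroup.of k) =
              PresentedGroup.of (Fin.castLE (Nat.sub_le_sub_right hN 1) k)) ∧
          ∀ i j : ℕ, i < j → j ≤ m → ∀ x y : BraidGroup n,
            Commute (Δ ^ i * ι x * (Δ ^ i)⁻¹) (Δ ^ j * ι y * (Δ ^ j)⁻¹) := by
  intro m n hm hn
  set K : ℕ := (m + 1) * n with hKdef
  set N : ℕ := 2 * K with hNdef
  have hKeq : K = n * m + n := by rw [hKdef]; ring
  have hnK : n ≤ K := by omega
  have hN : n ≤ N := by omega
  have hNK : 2 * K - 1 ≤ N - 1 := by omega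
  have hK1 : K - 1 ≤ N - 1 := by omega
  -- the displacing element
  set δA : BraidGroup N := Dd N 0 (K - 1) with hδA
  set δB : BraidGroup N := Dd N K (2 * K - 1) with hδB
  set c : BraidGroup N := δA ^ n with hc
  set c' : BraidGroup N := δB ^ n with hc'
  set Δ : BraidGroup N := c * c'⁻¹ with hΔdef
  have hδAB : Commute δA δB := Dd_comm_Dd (by omega)
  have hcc' : Commute c c' := hδAB.pow_pow n n
  -- Δ is in the commutator subgroup
  have hqΔ : Abelianization.of Δ = 1 := by
    rw [hΔdef, map_mul, map_inv, hc, hc', map_pow, map_pow, hδA, hδB,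
      abel_Dd hK1, abel_Dd hNK]
    rw [show K - 1 - 0 = K - 1 by omega, show 2 * K - 1 - K = K - 1 by omega]
    exact mul_inv_cancel _
  have hΔcomm : Δ ∈ commutator (BraidGroup N) := (QuotientGroup.eq_one_iff Δ).mp hqΔ
  -- conjugation by Δ ^ d shifts generators by n * d
  have hconj : ∀ d, 1 ≤ d → d ≤ m → ∀ k, k < n - 1 →
      Δ ^ d * Sg N k * (Δ ^ d)⁻¹ = Sg N (k + n * d) := by
    intro d hd1 hdm k hk
    have hnd : n * d ≤ n * m := Nat.mul_le_mul_left n hdm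
    have hSc' : Commute (Sg N k) c' := by
      rw [hc']
      exact (comm_Dd fun j hj _ => Sg_comm (by omega)).pow_right n
    have hΔd : Δ ^ d = c ^ d * (c' ^ d)⁻¹ := by
      rw [hΔdef, (hcc'.inv_right).mul_pow, inv_pow]
    have hcd : c ^ d * Sg N k * (c ^ d)⁻¹ = Sg N (k + n * d) := by
      rw [hc, ← pow_mul, Dd_pow_swap hK1 (n * d) k (by omega) (by omega)]
      rw [hδA]
      group
    rw [hΔd, mul_inv_rev, inv_inv]
    calc c ^ d * (c' ^ d)⁻¹ * Sg N k * (c' ^ d * (c ^ d)⁻¹)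
        = c ^ d * ((c' ^ d)⁻¹ * Sg N k * c' ^ d) * (c ^ d)⁻¹ := by group
      _ = c ^ d * Sg N k * (c ^ d)⁻¹ := by
          rw [← (hSc'.pow_right d).inv_right.eq]; group
      _ = Sg N (k + n * d) := hcd
  -- the inclusion homomorphism
  have hcast : n - 1 ≤ N - 1 := Nat.sub_le_sub_right hN 1
  have hrels : ∀ r ∈ braidRels n,
      FreeGroup.lift (fun k : Fin (n - 1) =>
        PresentedGroup.of (rels := braidRels N) (Fin.castLE hcast k)) r = 1 := by
    intro r hr
    rcases hr with ⟨i, j, hij, rfl⟩ | ⟨i, j, hij, rfl⟩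
    · simp only [map_mul, map_inv, FreeGroup.lift_apply_of]
      exact commutatorElement_eq_one_iff_commute.mpr (of_comm (by simpa using hij))
    · simp only [map_mul, map_inv, FreeGroup.lift_apply_of]
      rw [of_braid (i := Fin.castLE hcast i) (j := Fin.castLE hcast j) (by simpa using hij)]
      group
  set ι : BraidGroup n →* BraidGroup N := PresentedGroup.toGroup hrels with hι
  have hιof : ∀ k : Fin (n - 1),
      ι (PresentedGroup.of k) = PresentedGroup.of (Fin.castLE hcast k) := by
    intro k; rw [hι]; exact PresentedGroup.toGroup.of hrels
  have hof_S : ∀ k : Fin (n - 1),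
      PresentedGroup.of (rels := braidRels N) (Fin.castLE hcast k) = Sg N (k : ℕ) := by
    intro k
    rw [Sg_eq (show (k : ℕ) < N - 1 by omega)]
    rfl
  -- the image of ι lies in the closure of low generators
  set Aset : Set (BraidGroup N) := {g | ∃ k, k < n - 1 ∧ g = Sg N k} with hAset
  set Bset : Set (BraidGroup N) := {g | ∃ k, n ≤ k ∧ g = Sg N k} with hBset
  have hι_mem : ∀ x, ι x ∈ Subgroup.closure Aset := by
    intro x
    have := PresentedGroup.generated_by (braidRels n)
      (Subgroup.comap ι (Subgroup.closure Aset)) ?_ x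
    · exact Subgroup.mem_comap.mp this
    · intro j
      rw [Subgroup.mem_comap, hιof j, hof_S j]
      exact Subgroup.subset_closure ⟨(j : ℕ), j.isLt, rfl⟩
  have hφ_mem : ∀ d, 1 ≤ d → d ≤ m → ∀ y,
      Δ ^ d * ι y * (Δ ^ d)⁻¹ ∈ Subgroup.closure Bset := by
    intro d hd1 hdm y
    set φ : BraidGroup n →* BraidGroup N :=
      ((MulAut.conj (Δ ^ d)).toMonoidHom).comp ι with hφ
    have hφval : ∀ z, φ z = Δ ^ d * ι z * (Δ ^ d)⁻¹ := fun z => rfl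
    rw [← hφval]
    have := PresentedGroup.generated_by (braidRels n)
      (Subgroup.comap φ (Subgroup.closure Bset)) ?_ y
    · exact Subgroup.mem_comap.mp this
    · intro j
      rw [Subgroup.mem_comap, hφval, hιof j, hof_S j,
        hconj d hd1 hdm (j : ℕ) j.isLt]
      refine Subgroup.subset_closure ⟨(j : ℕ) + n * d, by nlinarith, rfl⟩
  -- generators of the two closures commute
  have hAB : ∀ a ∈ Aset, ∀ b ∈ Bset, Commute a b := by
    rintro a ⟨k, hk, rfl⟩ b ⟨l, hl, rfl⟩
    exact Sg_comm (by omega)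
  refine ⟨N, hN, Δ, hΔcomm, ι, hιof, ?_⟩
  intro i j hij hjm x y
  set d : ℕ := j - i with hd
  have key : Commute (ι x) (Δ ^ d * ι y * (Δ ^ d)⁻¹) :=
    closure_comm hAB (hι_mem x) (hφ_mem d (by omega) (by omega) y)
  have hpow : Δ ^ j = Δ ^ i * Δ ^ d := by
    rw [← pow_add]
    congr 1
    omega
  have := conj_commute (Δ ^ i) key
  rw [hpow, mul_inv_rev]
  calc Δ ^ i * ι x * (Δ ^ i)⁻¹ * (Δ ^ i * Δ ^ d * ι y * ((Δ ^ d)⁻¹ * (Δ ^ i)⁻¹))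
      = Δ ^ i * ι x * (Δ ^ i)⁻¹ * (Δ ^ i * (Δ ^ d * ι y * (Δ ^ d)⁻¹) * (Δ ^ i)⁻¹) := by group
    _ = Δ ^ i * (Δ ^ d * ι y * (Δ ^ d)⁻¹) * (Δ ^ i)⁻¹ * (Δ ^ i * ι x * (Δ ^ i)⁻¹) := this
    _ = Δ ^ i * Δ ^ d * ι y * ((Δ ^ d)⁻¹ * (Δ ^ i)⁻¹) * (Δ ^ i * ι x * (Δ ^ i)⁻¹) := by group
end
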